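/- Let A be the commutative local algebra generated over a field k by x₁,…,x_c, y₁,…,y_d subject to the relations x_i x_{i'} = 0 and y_j y_{j'} = 0 for all indices. Then A has Hilbert type (c+d, cd): the radical J satisfies J³ = 0, length(J/J²) = c + d, and J² has k-basis {x_i y_j : 1 ≤ i ≤ c, 1 ≤ j ≤ d}; moreover the ideal U = Σ_j A y_j satisfies U² = 0 and J² ⊆ JU, i.e., U is a left Conca ideal. -/

import Mathlib

/-- The composition length of a module, as the Krull dimension of its submodule lattice. -/
noncomputable def moduleLength (A M : Type*) [Ring A] [AddCommGroup M] [Module A M] : ℕ∞ :=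
  WithBot.unbotD 0 (Order.krullDim (Submodule A M))

open MvPolynomial in
/-- The relations `x_i x_{i'} = 0`, `y_j y_{j'} = 0` defining `Λ(c;a(1),…)`-type algebras. -/
def rels (k : Type*) [Field k] (c d : ℕ) : Set (MvPolynomial (Fin c ⊕ Fin d) k) :=
  {p | (∃ i i' : Fin c, p = X (Sum.inl i) * X (Sum.inl i')) ∨
       (∃ j j' : Fin d, p = X (Sum.inr j) * X (Sum.inr j'))}

/-- The commutative algebra `Λ(c,d) = k[x₁,…,x_c,y₁,…,y_d]/(x_i x_{i'}, y_j y_{j'})`. -/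
def Lam (k : Type*) [Field k] (c d : ℕ) : Type _ :=
  MvPolynomial (Fin c ⊕ Fin d) k ⧸ Ideal.span (rels k c d)

noncomputable instance (k : Type*) [Field k] (c d : ℕ) : CommRing (Lam k c d) :=
  Ideal.Quotient.commRing _

noncomputable instance (k : Type*) [Field k] (c d : ℕ) : Algebra k (Lam k c d) :=
  Ideal.Quotient.algebra k

open MvPolynomial in
/-- The generator `x_i` of `Λ(c,d)`. -/
noncomputable def xgen (k : Type*) [Field k] (c d : ℕ) (i : Fin c) : Lam k c d :=
  Ideal.Quotient.mk _ (X (Sum.inl i))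

open MvPolynomial in
/-- The generator `y_j` of `Λ(c,d)`. -/
noncomputable def ygen (k : Type*) [Field k] (c d : ℕ) (j : Fin d) : Lam k c d :=
  Ideal.Quotient.mk _ (X (Sum.inr j))

lemma krullDim_submodule (K V : Type*) [Field K] [AddCommGroup V] [Module K V]
    [FiniteDimensional K V] :
    Order.krullDim (Submodule K V) = ((Module.finrank K V : ℕ∞) : WithBot ℕ∞) := by
  apply le_antisymm
  · rw [Order.krullDim_eq_iSup_length, WithBot.coe_le_coe]
    apply iSup_le
    intro p
    rw [Nat.cast_le]
    have key : ∀ i : Fin (p.length + 1), (i : ℕ) ≤ Module.finrank K (p.toFun i) := by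
      intro i
      induction i using Fin.induction with
      | zero => exact Nat.zero_le _
      | succ i ih =>
          have h1 := Submodule.finrank_lt_finrank_of_lt (p.step i)
          have h2 : (i.castSucc : ℕ) = (i : ℕ) := rfl
          rw [h2] at ih
          have : ((i.succ : Fin (p.length + 1)) : ℕ) = (i : ℕ) + 1 := rfl
          rw [this]
          omega
    have := key (Fin.last _)
    have hle := Submodule.finrank_le (p.toFun (Fin.last _))
    simp only [Fin.val_last] at this
    omega
  · set n := Module.finrank K V with hn
    let b := Module.finBasis K V
    let f : Fin (n + 1) → Submodule K V := fun i => Submodule.span K (b '' {j | (j : ℕ) < i})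
    have step : ∀ i : Fin n, f i.castSucc < f i.succ := by
      intro i
      rw [SetLike.lt_iff_le_and_exists]
      constructor
      · apply Submodule.span_mono
        apply Set.image_mono
        intro j hj
        simp only [Set.mem_setOf_eq] at hj ⊢
        have : ((i.castSucc : Fin (n+1)) : ℕ) = (i : ℕ) := rfl
        rw [this] at hj
        have : ((i.succ : Fin (n+1)) : ℕ) = (i : ℕ) + 1 := rfl
        rw [this]
        omega
      · refine ⟨b i, Submodule.subset_span ⟨i, ?_, rfl⟩, ?_⟩
        · show (i : ℕ) < (i.succ : Fin (n+1))
          have : ((i.succ : Fin (n+1)) : ℕ) = (i : ℕ) + 1 := rfl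
          omega
        · apply b.linearIndependent.notMem_span_image
          show ¬ ((i : ℕ) < (i.castSucc : Fin (n+1)))
          have : ((i.castSucc : Fin (n+1)) : ℕ) = (i : ℕ) := rfl
          omega
    let chain : LTSeries (Submodule K V) := ⟨n, f, step⟩
    have := Order.LTSeries.length_le_krullDim chain
    exact_mod_cast this

namespace Stmt18
open MvPolynomial Pointwise

variable (k : Type*) [Field k] (c d : ℕ)

noncomputable def pia : MvPolynomial (Fin c ⊕ Fin d) k →+* Lam k c d :=
  Ideal.Quotient.mk (Ideal.span (rels k c d))

lemma pia_surj : Function.Surjective (pia k c d) := Ideal.Quotient.mk_surjective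

lemma xgen_eq (i : Fin c) : xgen k c d i = pia k c d (X (Sum.inl i)) := rfl
lemma ygen_eq (j : Fin d) : ygen k c d j = pia k c d (X (Sum.inr j)) := rfl

lemma xx (i i' : Fin c) : xgen k c d i * xgen k c d i' = 0 := by
  rw [xgen_eq, xgen_eq, ← map_mul]
  exact Ideal.Quotient.eq_zero_iff_mem.mpr (Ideal.subset_span (Or.inl ⟨i, i', rfl⟩))

lemma yy (j j' : Fin d) : ygen k c d j * ygen k c d j' = 0 := by
  rw [ygen_eq, ygen_eq, ← map_mul]
  exact Ideal.Quotient.eq_zero_iff_mem.mpr (Ideal.subset_span (Or.inr ⟨j, j', rfl⟩))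

/-- The generating set of the radical. -/
def S : Set (Lam k c d) := Set.range (xgen k c d) ∪ Set.range (ygen k c d)

/-- The maximal ideal. -/
noncomputable def mm : Ideal (Lam k c d) := Ideal.span (S k c d)

lemma xgen_mem (i : Fin c) : xgen k c d i ∈ mm k c d :=
  Ideal.subset_span (Or.inl ⟨i, rfl⟩)

lemma ygen_mem (j : Fin d) : ygen k c d j ∈ mm k c d :=
  Ideal.subset_span (Or.inr ⟨j, rfl⟩)

lemma piaX_mem (s : Fin c ⊕ Fin d) : pia k c d (X s) ∈ mm k c d := by
  cases s with
  | inl i => exact xgen_mem k c d i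
  | inr j => exact ygen_mem k c d j

/-- The augmentation map. -/
noncomputable def eps : Lam k c d →ₐ[k] k :=
  Ideal.Quotient.liftₐ (Ideal.span (rels k c d)) (aeval 0) (by
    intro a ha
    refine Submodule.span_induction (fun p hp => ?_) (map_zero _) (fun p q _ _ h h' => by
      simp [map_add, h, h']) (fun r p _ h => by rw [smul_eq_mul, map_mul, h, mul_zero]) ha
    rcases hp with ⟨i, i', rfl⟩ | ⟨j, j', rfl⟩ <;> simp)

lemma eps_pia (p : MvPolynomial (Fin c ⊕ Fin d) k) :
    eps k c d (pia k c d p) = aeval (0 : Fin c ⊕ Fin d → k) p :=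
  Ideal.Quotient.liftₐ_apply _ _ _ _

lemma eps_algebraMap (a : k) : eps k c d (algebraMap k (Lam k c d) a) = a := by
  simp

lemma eps_surj : Function.Surjective (eps k c d) :=
  fun a => ⟨algebraMap k _ a, eps_algebraMap k c d a⟩

lemma sub_eps_mem (a : Lam k c d) :
    a - algebraMap k (Lam k c d) (eps k c d a) ∈ mm k c d := by
  obtain ⟨p, rfl⟩ := pia_surj k c d a
  induction p using MvPolynomial.induction_on with
  | C a => 
      have : pia k c d (C a) = algebraMap k (Lam k c d) a := rfl
      rw [this, eps_algebraMap, sub_self]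
      exact zero_mem _
  | add p q hp hq =>
      have : pia k c d (p + q) - algebraMap k (Lam k c d) (eps k c d (pia k c d (p + q)))
          = (pia k c d p - algebraMap k _ (eps k c d (pia k c d p)))
            + (pia k c d q - algebraMap k _ (eps k c d (pia k c d q))) := by
        rw [map_add, map_add, map_add]; ring
      rw [this]; exact add_mem hp hq
  | mul_X p s hp =>
      have h1 : eps k c d (pia k c d (p * X s)) = 0 := by
        rw [map_mul, map_mul, eps_pia _ _ _ (X s)]; simp
      rw [h1, map_zero, sub_zero, map_mul]
      exact Ideal.mul_mem_left _ _ (piaX_mem k c d s)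

lemma ker_eps : RingHom.ker (eps k c d) = mm k c d := by
  apply le_antisymm
  · intro a ha
    rw [RingHom.mem_ker] at ha
    have := sub_eps_mem k c d a
    rwa [ha, map_zero, sub_zero] at this
  · rw [mm, Ideal.span_le]
    rintro a (⟨i, rfl⟩ | ⟨j, rfl⟩) <;>
      simp only [SetLike.mem_coe, RingHom.mem_ker] <;>
      [rw [xgen_eq, eps_pia]; rw [ygen_eq, eps_pia]] <;> simp

lemma mm_isMaximal : (mm k c d).IsMaximal := by
  rw [← ker_eps]
  exact RingHom.ker_isMaximal_of_surjective _ (eps_surj k c d)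

lemma sq_zero (a : Lam k c d) (ha : a ∈ S k c d) : a * a = 0 := by
  rcases ha with ⟨i, rfl⟩ | ⟨j, rfl⟩
  · exact xx k c d i i
  · exact yy k c d j j

lemma jacobson_eq : Ideal.jacobson (⊥ : Ideal (Lam k c d)) = mm k c d := by
  apply le_antisymm
  · exact sInf_le ⟨bot_le, mm_isMaximal k c d⟩
  · rw [mm, Ideal.span_le]
    intro a ha
    rw [SetLike.mem_coe, Ideal.mem_jacobson_bot]
    intro y
    have : IsNilpotent (a * y) := by
      refine ⟨2, ?_⟩
      have : (a * y) ^ 2 = a * a * (y * y) := by ring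
      rw [this, sq_zero k c d a ha, zero_mul]
    rw [add_comm]
    exact this.isUnit_one_add

lemma triple_zero (a b e : Lam k c d) (ha : a ∈ S k c d) (hb : b ∈ S k c d)
    (he : e ∈ S k c d) : a * b * e = 0 := by
  rcases ha with ⟨i, rfl⟩ | ⟨j, rfl⟩ <;> rcases hb with ⟨i', rfl⟩ | ⟨j', rfl⟩ <;>
    rcases he with ⟨i'', rfl⟩ | ⟨j'', rfl⟩
  · rw [xx]; ring
  · rw [xx]; ring
  · have : xgen k c d i * ygen k c d j' * xgen k c d i''
        = xgen k c d i * xgen k c d i'' * ygen k c d j' := by ring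
    rw [this, xx]; ring
  · have : xgen k c d i * ygen k c d j' * ygen k c d j''
        = xgen k c d i * (ygen k c d j' * ygen k c d j'') := by ring
    rw [this, yy]; ring
  · have : ygen k c d j * xgen k c d i' * xgen k c d i''
        = xgen k c d i' * xgen k c d i'' * ygen k c d j := by ring
    rw [this, xx]; ring
  · have : ygen k c d j * xgen k c d i' * ygen k c d j''
        = ygen k c d j * ygen k c d j'' * xgen k c d i' := by ring
    rw [this, yy]; ring
  · rw [yy]; ring
  · rw [yy]; ring

lemma mm_cube : mm k c d ^ 3 = ⊥ := by
  have h3 : mm k c d ^ 3 = Ideal.span (S k c d * S k c d * S k c d) := by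
    rw [mm, pow_succ, pow_two, Ideal.span_mul_span', Ideal.span_mul_span']
  rw [h3, eq_bot_iff, Ideal.span_le]
  rintro _ ⟨_, ⟨a, ha, b, hb, rfl⟩, e, he, rfl⟩
  simp [triple_zero k c d a b e ha hb he]


/-! ### Coefficient functionals -/

/-- Total degree in the `x` variables. -/
def wx (m : (Fin c ⊕ Fin d) →₀ ℕ) : ℕ := ∑ i : Fin c, m (Sum.inl i)

/-- Total degree in the `y` variables. -/
def wy (m : (Fin c ⊕ Fin d) →₀ ℕ) : ℕ := ∑ j : Fin d, m (Sum.inr j)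

lemma wx_add (u v : (Fin c ⊕ Fin d) →₀ ℕ) : wx c d (u + v) = wx c d u + wx c d v := by
  simp [wx, Finset.sum_add_distrib]

lemma wy_add (u v : (Fin c ⊕ Fin d) →₀ ℕ) : wy c d (u + v) = wy c d u + wy c d v := by
  simp [wy, Finset.sum_add_distrib]

lemma wx_single_inl (i : Fin c) (n : ℕ) : wx c d (Finsupp.single (Sum.inl i) n) = n := by
  simp [wx, Finsupp.single_apply]

lemma wx_single_inr (j : Fin d) (n : ℕ) : wx c d (Finsupp.single (Sum.inr j) n) = 0 := by
  simp [wx, Finsupp.single_apply]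

lemma wy_single_inl (i : Fin c) (n : ℕ) : wy c d (Finsupp.single (Sum.inl i) n) = 0 := by
  simp [wy, Finsupp.single_apply]

lemma wy_single_inr (j : Fin d) (n : ℕ) : wy c d (Finsupp.single (Sum.inr j) n) = n := by
  simp [wy, Finsupp.single_apply]

/-- The ideal of polynomials all of whose monomials have `x`-degree at least 2 or
`y`-degree at least 2. -/
def DD : Ideal (MvPolynomial (Fin c ⊕ Fin d) k) where
  carrier := {p | ∀ m ∈ p.support, 2 ≤ wx c d m ∨ 2 ≤ wy c d m}
  zero_mem' := by simp
  add_mem' := by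
    intro p q hp hq m hm
    rcases Finset.mem_union.mp (MvPolynomial.support_add hm) with h | h
    · exact hp m h
    · exact hq m h
  smul_mem' := by
    intro r p hp m hm
    rw [smul_eq_mul] at hm
    obtain ⟨u, hu, v, hv, rfl⟩ := Finset.mem_add.mp (MvPolynomial.support_mul r p hm)
    rcases hp v hv with h | h
    · exact Or.inl (by rw [wx_add]; omega)
    · exact Or.inr (by rw [wy_add]; omega)

lemma span_rels_le_DD : Ideal.span (rels k c d) ≤ DD k c d := by
  rw [Ideal.span_le]
  rintro p (⟨i, i', rfl⟩ | ⟨j, j', rfl⟩) <;> intro m hm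
  · obtain ⟨u, hu, v, hv, rfl⟩ := Finset.mem_add.mp (MvPolynomial.support_mul _ _ hm)
    rw [MvPolynomial.support_X, Finset.mem_singleton] at hu hv
    subst hu; subst hv
    exact Or.inl (by rw [wx_add, wx_single_inl, wx_single_inl])
  · obtain ⟨u, hu, v, hv, rfl⟩ := Finset.mem_add.mp (MvPolynomial.support_mul _ _ hm)
    rw [MvPolynomial.support_X, Finset.mem_singleton] at hu hv
    subst hu; subst hv
    exact Or.inr (by rw [wy_add, wy_single_inr, wy_single_inr])

lemma coeff_vanish (m : (Fin c ⊕ Fin d) →₀ ℕ) (h1 : wx c d m ≤ 1) (h2 : wy c d m ≤ 1) :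
    ∀ p ∈ Ideal.span (rels k c d), MvPolynomial.coeff m p = 0 := by
  intro p hp
  by_contra h
  rcases span_rels_le_DD k c d hp m (MvPolynomial.mem_support_iff.mpr h) with h' | h' <;> omega

/-- Descend a coefficient functional to the quotient. -/
noncomputable def cf (m : (Fin c ⊕ Fin d) →₀ ℕ)
    (h : ∀ p ∈ Ideal.span (rels k c d), MvPolynomial.coeff m p = 0) :
    Lam k c d →ₗ[k] k :=
  (Submodule.liftQ ((Ideal.span (rels k c d)).restrictScalars k) (MvPolynomial.lcoeff k m)
      (fun p hp => h p hp)) ∘ₗ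
    (Submodule.Quotient.restrictScalarsEquiv k (Ideal.span (rels k c d))).symm.toLinearMap

lemma cf_pia (m : (Fin c ⊕ Fin d) →₀ ℕ)
    (h : ∀ p ∈ Ideal.span (rels k c d), MvPolynomial.coeff m p = 0)
    (p : MvPolynomial (Fin c ⊕ Fin d) k) :
    cf k c d m h (pia k c d p) = MvPolynomial.coeff m p := rfl

/-- Monomial `x_i`. -/
noncomputable def mx (i : Fin c) : (Fin c ⊕ Fin d) →₀ ℕ := Finsupp.single (Sum.inl i) 1
/-- Monomial `y_j`. -/
noncomputable def my (j : Fin d) : (Fin c ⊕ Fin d) →₀ ℕ := Finsupp.single (Sum.inr j) 1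
/-- Monomial `x_i y_j`. -/
noncomputable def mxy (i : Fin c) (j : Fin d) : (Fin c ⊕ Fin d) →₀ ℕ := mx c d i + my c d j

lemma mx_van : ∀ p ∈ Ideal.span (rels k c d), MvPolynomial.coeff (mx c d i) p = 0 :=
  coeff_vanish k c d _ (le_of_eq (wx_single_inl c d _ _)) (by rw [mx, wy_single_inl]; omega)

lemma my_van : ∀ p ∈ Ideal.span (rels k c d), MvPolynomial.coeff (my c d j) p = 0 :=
  coeff_vanish k c d _ (by rw [my, wx_single_inr]; omega) (le_of_eq (wy_single_inr c d _ _))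

lemma mxy_van (i : Fin c) (j : Fin d) :
    ∀ p ∈ Ideal.span (rels k c d), MvPolynomial.coeff (mxy c d i j) p = 0 :=
  coeff_vanish k c d _ (by rw [mxy, wx_add, mx, my, wx_single_inl, wx_single_inr])
    (by rw [mxy, wy_add, mx, my, wy_single_inl, wy_single_inr])

/-- The functional dual to `x_i`. -/
noncomputable def muf (i : Fin c) : Lam k c d →ₗ[k] k := cf k c d (mx c d i) (mx_van k c d)
/-- The functional dual to `y_j`. -/
noncomputable def nuf (j : Fin d) : Lam k c d →ₗ[k] k := cf k c d (my c d j) (my_van k c d)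
/-- The functional dual to `x_i y_j`. -/
noncomputable def lamf (i : Fin c) (j : Fin d) : Lam k c d →ₗ[k] k :=
  cf k c d (mxy c d i j) (mxy_van k c d i j)

lemma xy_eq_pia (i : Fin c) (j : Fin d) :
    xgen k c d i * ygen k c d j = pia k c d (MvPolynomial.monomial (mxy c d i j) 1) := by
  rw [xgen_eq, ygen_eq, ← map_mul]
  congr 1
  rw [MvPolynomial.X, MvPolynomial.X, MvPolynomial.monomial_mul, one_mul, mxy, mx, my]

lemma mxy_apply_inl (i : Fin c) (j : Fin d) (t : Fin c) :
    mxy c d i j (Sum.inl t) = if i = t then 1 else 0 := by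
  simp [mxy, mx, my, Finsupp.single_apply]

lemma mxy_apply_inr (i : Fin c) (j : Fin d) (t : Fin d) :
    mxy c d i j (Sum.inr t) = if j = t then 1 else 0 := by
  simp [mxy, mx, my, Finsupp.single_apply]

lemma mxy_inj (i i' : Fin c) (j j' : Fin d) :
    mxy c d i' j' = mxy c d i j ↔ i' = i ∧ j' = j := by
  constructor
  · intro h
    have h1 := DFunLike.congr_fun h (Sum.inl i')
    have h2 := DFunLike.congr_fun h (Sum.inr j')
    rw [mxy_apply_inl c d i' j' i', mxy_apply_inl c d i j i', if_pos rfl] at h1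
    rw [mxy_apply_inr c d i' j' j', mxy_apply_inr c d i j j', if_pos rfl] at h2
    refine ⟨?_, ?_⟩
    · rcases eq_or_ne i i' with rfl | hne
      · rfl
      · rw [if_neg hne] at h1; exact absurd h1 one_ne_zero
    · rcases eq_or_ne j j' with rfl | hne
      · rfl
      · rw [if_neg hne] at h2; exact absurd h2 one_ne_zero
  · rintro ⟨rfl, rfl⟩; rfl

lemma lamf_xy (i i' : Fin c) (j j' : Fin d) :
    lamf k c d i j (xgen k c d i' * ygen k c d j')
      = if i' = i ∧ j' = j then 1 else 0 := by
  rw [xy_eq_pia, lamf, cf_pia, MvPolynomial.coeff_monomial]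
  simp only [mxy_inj]

lemma lamf_x (i i' : Fin c) (j : Fin d) : lamf k c d i j (xgen k c d i') = 0 := by
  rw [xgen_eq, lamf, cf_pia, MvPolynomial.coeff_X']
  rw [if_neg]
  intro h
  have := DFunLike.congr_fun h (Sum.inr j)
  rw [mxy_apply_inr, if_pos rfl] at this
  simp [Finsupp.single_apply] at this

lemma lamf_y (i : Fin c) (j j' : Fin d) : lamf k c d i j (ygen k c d j') = 0 := by
  rw [ygen_eq, lamf, cf_pia, MvPolynomial.coeff_X']
  rw [if_neg]
  intro h
  have := DFunLike.congr_fun h (Sum.inl i)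
  rw [mxy_apply_inl, if_pos rfl] at this
  simp [Finsupp.single_apply] at this

lemma muf_x (i i' : Fin c) : muf k c d i (xgen k c d i') = if i' = i then 1 else 0 := by
  rw [xgen_eq, muf, cf_pia, MvPolynomial.coeff_X', mx]
  have : ((Finsupp.single (Sum.inl i') 1 : (Fin c ⊕ Fin d) →₀ ℕ) = Finsupp.single (Sum.inl i) 1) ↔ i' = i := by
    constructor
    · intro h
      exact Sum.inl_injective (Finsupp.single_left_injective one_ne_zero h)
    · rintro rfl; rfl
  simp only [this]

lemma muf_y (i : Fin c) (j : Fin d) : muf k c d i (ygen k c d j) = 0 := by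
  rw [ygen_eq, muf, cf_pia, MvPolynomial.coeff_X', mx, if_neg]
  intro h
  have := DFunLike.congr_fun h (Sum.inl i)
  simp [Finsupp.single_apply] at this

lemma nuf_y (j j' : Fin d) : nuf k c d j (ygen k c d j') = if j' = j then 1 else 0 := by
  rw [ygen_eq, nuf, cf_pia, MvPolynomial.coeff_X', my]
  have : ((Finsupp.single (Sum.inr j') 1 : (Fin c ⊕ Fin d) →₀ ℕ) = Finsupp.single (Sum.inr j) 1) ↔ j' = j := by
    constructor
    · intro h
      exact Sum.inr_injective (Finsupp.single_left_injective one_ne_zero h)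
    · rintro rfl; rfl
  simp only [this]

lemma nuf_x (i : Fin c) (j : Fin d) : nuf k c d j (xgen k c d i) = 0 := by
  rw [xgen_eq, nuf, cf_pia, MvPolynomial.coeff_X', my, if_neg]
  intro h
  have := DFunLike.congr_fun h (Sum.inr j)
  simp [Finsupp.single_apply] at this

lemma muf_xy (i i' : Fin c) (j' : Fin d) :
    muf k c d i (xgen k c d i' * ygen k c d j') = 0 := by
  rw [xy_eq_pia, muf, cf_pia, MvPolynomial.coeff_monomial, if_neg]
  intro h
  have := DFunLike.congr_fun h (Sum.inr j')
  rw [mxy_apply_inr, if_pos rfl] at this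
  simp [mx, Finsupp.single_apply] at this

lemma nuf_xy (i' : Fin c) (j j' : Fin d) :
    nuf k c d j (xgen k c d i' * ygen k c d j') = 0 := by
  rw [xy_eq_pia, nuf, cf_pia, MvPolynomial.coeff_monomial, if_neg]
  intro h
  have := DFunLike.congr_fun h (Sum.inl i')
  rw [mxy_apply_inl, if_pos rfl] at this
  simp [my, Finsupp.single_apply] at this


/-! ### The square of the radical -/

/-- The products `x_i y_j`. -/
noncomputable def xyfun : Fin c × Fin d → Lam k c d := fun p => xgen k c d p.1 * ygen k c d p.2

lemma mm_sq : mm k c d ^ 2 = Ideal.span (Set.range (xyfun k c d)) := by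
  rw [mm, pow_two, Ideal.span_mul_span']
  apply le_antisymm
  · rw [Ideal.span_le]
    rintro _ ⟨a, ha, b, hb, rfl⟩
    dsimp only
    rcases ha with ⟨i, rfl⟩ | ⟨j, rfl⟩ <;> rcases hb with ⟨i', rfl⟩ | ⟨j', rfl⟩
    · rw [xx]; exact zero_mem _
    · exact Ideal.subset_span ⟨(i, j'), rfl⟩
    · rw [mul_comm]; exact Ideal.subset_span ⟨(i', j), rfl⟩
    · rw [yy]; exact zero_mem _
  · rw [Ideal.span_le]
    rintro _ ⟨⟨i, j⟩, rfl⟩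
    exact Ideal.subset_span ⟨_, Or.inl ⟨i, rfl⟩, _, Or.inr ⟨j, rfl⟩, rfl⟩

lemma mem_mm_mul_sq_eq_zero {n v : Lam k c d} (hn : n ∈ mm k c d) (hv : v ∈ mm k c d ^ 2) :
    n * v = 0 := by
  have h3 : n * v ∈ mm k c d ^ 3 := by
    have h := Ideal.mul_mem_mul hn hv
    have e : mm k c d * mm k c d ^ 2 = mm k c d ^ 3 := by ring
    rwa [e] at h
  rw [mm_cube] at h3
  simpa using h3

lemma restrict_sq :
    Submodule.restrictScalars k
        ((mm k c d ^ 2 : Ideal (Lam k c d)) : Submodule (Lam k c d) (Lam k c d))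
      = Submodule.span k (Set.range (xyfun k c d)) := by
  apply le_antisymm
  · intro v hv
    have hv' : v ∈ Ideal.span (Set.range (xyfun k c d)) := by rwa [← mm_sq]
    refine Submodule.span_induction
      (p := fun x _ => x ∈ Submodule.span k (Set.range (xyfun k c d)))
      (fun x hx => Submodule.subset_span hx) (zero_mem _)
      (fun x y _ _ hx hy => add_mem hx hy) ?_ hv'
    intro a x hx hmem
    have hx2 : x ∈ mm k c d ^ 2 := by rw [mm_sq]; exact hx
    have hdec : a • x = algebraMap k _ (eps k c d a) * x
        + (a - algebraMap k _ (eps k c d a)) * x := by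
      rw [smul_eq_mul]; ring
    rw [hdec, mem_mm_mul_sq_eq_zero k c d (sub_eps_mem k c d a) hx2, add_zero,
      ← Algebra.smul_def]
    exact Submodule.smul_mem _ _ hmem
  · rw [Submodule.span_le]
    rintro _ ⟨⟨i, j⟩, rfl⟩
    show xyfun k c d (i, j) ∈ mm k c d ^ 2
    rw [mm_sq]
    exact Ideal.subset_span ⟨(i, j), rfl⟩

lemma single_li : LinearIndependent k (fun p : Fin c × Fin d => Pi.single p (1 : k)) := by
  have := (Pi.basisFun k (Fin c × Fin d)).linearIndependent
  have he : ⇑(Pi.basisFun k (Fin c × Fin d)) = fun p : Fin c × Fin d => Pi.single p (1 : k) :=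
    funext fun p => funext fun q => by simp [Pi.basisFun_apply]
  rwa [he] at this

lemma xyfun_li : LinearIndependent k (xyfun k c d) := by
  apply LinearIndependent.of_comp (LinearMap.pi (fun p : Fin c × Fin d => lamf k c d p.1 p.2))
  have comp : (⇑(LinearMap.pi (fun p : Fin c × Fin d => lamf k c d p.1 p.2)) ∘ xyfun k c d)
      = fun p => Pi.single p (1 : k) := by
    funext q
    funext r
    simp only [Function.comp_apply, LinearMap.pi_apply, xyfun]
    rw [lamf_xy]
    rcases eq_or_ne q r with rfl | h
    · rw [if_pos ⟨rfl, rfl⟩, Pi.single_eq_same]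
    · rw [if_neg (fun hc => h (Prod.ext hc.1 hc.2)), Pi.single_apply, if_neg (Ne.symm h)]
  rw [comp]
  exact single_li k c d

/-- The basis of `J²` given by the products `x_i y_j`. -/
noncomputable def sqBasis : Module.Basis (Fin c × Fin d) k
    (Submodule.restrictScalars k
      ((mm k c d ^ 2 : Ideal (Lam k c d)) : Submodule (Lam k c d) (Lam k c d))) :=
  (Module.Basis.span (xyfun_li k c d)).map (LinearEquiv.ofEq _ _ (restrict_sq k c d).symm)

lemma sqBasis_apply (i : Fin c) (j : Fin d) :
    (sqBasis k c d (i, j) : Lam k c d) = xgen k c d i * ygen k c d j := by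
  rw [sqBasis, Module.Basis.map_apply]
  have h1 : ((LinearEquiv.ofEq _ _ (restrict_sq k c d).symm)
      (Module.Basis.span (xyfun_li k c d) (i, j)) : Lam k c d)
      = ((Module.Basis.span (xyfun_li k c d) (i, j) : Lam k c d)) := rfl
  rw [h1, Module.Basis.span_apply]
  rfl

lemma U_sq : Ideal.span (Set.range (ygen k c d)) * Ideal.span (Set.range (ygen k c d)) = ⊥ := by
  rw [Ideal.span_mul_span', eq_bot_iff, Ideal.span_le]
  rintro _ ⟨_, ⟨j, rfl⟩, _, ⟨j', rfl⟩, rfl⟩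
  simp [yy]

lemma sq_le_JU : mm k c d ^ 2 ≤ mm k c d * Ideal.span (Set.range (ygen k c d)) := by
  rw [mm_sq, Ideal.span_le]
  rintro _ ⟨⟨i, j⟩, rfl⟩
  exact Ideal.mul_mem_mul (xgen_mem k c d i) (Ideal.subset_span ⟨j, rfl⟩)


/-! ### The radical modulo its square -/

/-- The submodule `J²` of `J`. -/
noncomputable def NN : Submodule (Lam k c d) (↥(mm k c d)) :=
  Submodule.comap (mm k c d).subtype ((mm k c d) ^ 2 : Ideal (Lam k c d))

/-- The quotient `J/J²`. -/
abbrev MM := (↥(mm k c d)) ⧸ (NN k c d)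

lemma smul_quot (a : Lam k c d) (v : MM k c d) : a • v = eps k c d a • v := by
  obtain ⟨u, rfl⟩ := Submodule.Quotient.mk_surjective _ v
  have hdec : a • u = (algebraMap k (Lam k c d) (eps k c d a)) • u
      + (a - algebraMap k (Lam k c d) (eps k c d a)) • u := by
    rw [← add_smul]; ring_nf
  rw [← Submodule.Quotient.mk_smul, hdec]
  have hz : (Submodule.Quotient.mk ((a - algebraMap k (Lam k c d) (eps k c d a)) • u) :
      MM k c d) = 0 := by
    rw [Submodule.Quotient.mk_eq_zero]
    show (mm k c d).subtype ((a - algebraMap k (Lam k c d) (eps k c d a)) • u)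
      ∈ (mm k c d) ^ 2
    have : (mm k c d).subtype ((a - algebraMap k (Lam k c d) (eps k c d a)) • u)
        = (a - algebraMap k (Lam k c d) (eps k c d a)) * (u : Lam k c d) := rfl
    rw [this, pow_two]
    exact Ideal.mul_mem_mul (sub_eps_mem k c d a) u.2
  rw [Submodule.Quotient.mk_add, hz, add_zero, Submodule.Quotient.mk_smul,
    algebraMap_smul]

/-- The submodule lattices of `J/J²` over `A` and over `k` agree. -/
noncomputable def latticeIso :
    Submodule (Lam k c d) (MM k c d) ≃o Submodule k (MM k c d) where
  toFun P := P.restrictScalars k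
  invFun Q :=
    { carrier := Q
      add_mem' := fun h h' => Q.add_mem h h'
      zero_mem' := Q.zero_mem
      smul_mem' := fun a v hv => by
        show a • v ∈ Q
        rw [smul_quot]
        exact Q.smul_mem _ hv }
  left_inv P := SetLike.coe_injective rfl
  right_inv Q := SetLike.coe_injective rfl
  map_rel_iff' := Iff.rfl

/-- The combined dual functionals on degree one. -/
noncomputable def theta : Lam k c d →ₗ[k] (Fin c → k) × (Fin d → k) :=
  LinearMap.prod (LinearMap.pi (fun i => muf k c d i)) (LinearMap.pi (fun j => nuf k c d j))

lemma theta_sq (v : Lam k c d) (hv : v ∈ mm k c d ^ 2) : theta k c d v = 0 := by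
  have hv' : v ∈ Submodule.span k (Set.range (xyfun k c d)) := by
    rw [← restrict_sq]; exact hv
  have hle : Submodule.span k (Set.range (xyfun k c d)) ≤ LinearMap.ker (theta k c d) := by
    rw [Submodule.span_le]
    rintro _ ⟨⟨i, j⟩, rfl⟩
    rw [SetLike.mem_coe, LinearMap.mem_ker]
    have : xyfun k c d (i, j) = xgen k c d i * ygen k c d j := rfl
    rw [this]
    refine Prod.ext ?_ ?_
    · funext i'; simp [theta, muf_xy]
    · funext j'; simp [theta, nuf_xy]
  exact LinearMap.mem_ker.mp (hle hv')

/-- `theta` restricted to `J`. -/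
noncomputable def ff : (↥(mm k c d)) →ₗ[k] (Fin c → k) × (Fin d → k) :=
  (theta k c d) ∘ₗ ((mm k c d).subtype.restrictScalars k)

/-- The induced map on `J/J²`. -/
noncomputable def psi : MM k c d →ₗ[k] (Fin c → k) × (Fin d → k) :=
  (Submodule.liftQ ((NN k c d).restrictScalars k) (ff k c d)
      (fun u hu => theta_sq k c d _ hu)) ∘ₗ
    (Submodule.Quotient.restrictScalarsEquiv k (NN k c d)).symm.toLinearMap

lemma psi_mk (u : ↥(mm k c d)) :
    psi k c d (Submodule.Quotient.mk u) = theta k c d (u : Lam k c d) := rfl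

/-- The candidate basis vectors of `J/J²`. -/
noncomputable def w : Fin c ⊕ Fin d → MM k c d :=
  Sum.elim (fun i => Submodule.Quotient.mk ⟨xgen k c d i, xgen_mem k c d i⟩)
    (fun j => Submodule.Quotient.mk ⟨ygen k c d j, ygen_mem k c d j⟩)

/-- The target family: the standard basis of the product. -/
noncomputable def v0 : Fin c ⊕ Fin d → (Fin c → k) × (Fin d → k) :=
  Sum.elim (fun i => (Pi.single i 1, 0)) (fun j => (0, Pi.single j 1))

lemma v0_li : LinearIndependent k (v0 k c d) := by
  have hb : ⇑((Pi.basisFun k (Fin c)).prod (Pi.basisFun k (Fin d))) = v0 k c d := by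
    funext s
    cases s with
    | inl i =>
        refine Prod.ext ?_ ?_ <;> simp [v0]
    | inr j =>
        refine Prod.ext ?_ ?_ <;> simp [v0]
  have := ((Pi.basisFun k (Fin c)).prod (Pi.basisFun k (Fin d))).linearIndependent
  rwa [hb] at this

lemma w_li : LinearIndependent k (w k c d) := by
  apply LinearIndependent.of_comp (psi k c d)
  have hcomp : ⇑(psi k c d) ∘ w k c d = v0 k c d := by
    funext s
    cases s with
    | inl i =>
        show psi k c d (Submodule.Quotient.mk ⟨xgen k c d i, xgen_mem k c d i⟩) = _
        rw [psi_mk]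
        refine Prod.ext ?_ ?_
        · funext i'
          simp [theta, v0, muf_x]
          rw [Pi.single_apply]
          by_cases h : i' = i
          · subst h; simp
          · rw [if_neg h, if_neg (Ne.symm h)]
        · funext j'
          simp [theta, v0, nuf_x]
    | inr j =>
        show psi k c d (Submodule.Quotient.mk ⟨ygen k c d j, ygen_mem k c d j⟩) = _
        rw [psi_mk]
        refine Prod.ext ?_ ?_
        · funext i'
          simp [theta, v0, muf_y]
        · funext j'
          simp [theta, v0, nuf_y]
          rw [Pi.single_apply]
          by_cases h : j' = j
          · subst h; simp
          · rw [if_neg h, if_neg (Ne.symm h)]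
  rw [hcomp]
  exact v0_li k c d

lemma restrict_mm :
    Submodule.restrictScalars k ((mm k c d : Ideal (Lam k c d)) : Submodule (Lam k c d) (Lam k c d))
      = Submodule.span k (S k c d ∪ Set.range (xyfun k c d)) := by
  apply le_antisymm
  · intro t ht
    have ht' : t ∈ Ideal.span (S k c d) := ht
    refine Submodule.span_induction
      (p := fun x _ => x ∈ Submodule.span k (S k c d ∪ Set.range (xyfun k c d)))
      (fun x hx => Submodule.subset_span (Or.inl hx)) (zero_mem _)
      (fun x y _ _ hx hy => add_mem hx hy) ?_ ht'
    intro a x hx ih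
    have hxm : x ∈ mm k c d := hx
    have hdec : a • x = algebraMap k _ (eps k c d a) * x
        + (a - algebraMap k _ (eps k c d a)) * x := by
      rw [smul_eq_mul]; ring
    have h2 : (a - algebraMap k _ (eps k c d a)) * x ∈ mm k c d ^ 2 := by
      rw [pow_two]
      exact Ideal.mul_mem_mul (sub_eps_mem k c d a) hxm
    have h2' : (a - algebraMap k _ (eps k c d a)) * x
        ∈ Submodule.span k (Set.range (xyfun k c d)) := by
      rw [← restrict_sq]; exact h2
    rw [hdec, ← Algebra.smul_def]
    exact add_mem (Submodule.smul_mem _ _ ih)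
      (Submodule.span_mono Set.subset_union_right h2')
  · rw [Submodule.span_le]
    rintro x (hx | ⟨⟨i, j⟩, rfl⟩)
    · exact Ideal.subset_span hx
    · have : xyfun k c d (i, j) ∈ mm k c d ^ 2 := by
        rw [mm_sq]; exact Ideal.subset_span ⟨(i, j), rfl⟩
      exact Ideal.pow_le_self two_ne_zero this

lemma w_span : ⊤ ≤ Submodule.span k (Set.range (w k c d)) := by
  intro v _
  obtain ⟨u, rfl⟩ := Submodule.Quotient.mk_surjective _ v
  have hu : (u : Lam k c d) ∈ Submodule.span k (S k c d ∪ Set.range (xyfun k c d)) := by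
    rw [← restrict_mm]; exact u.2
  have claim : ∀ t, t ∈ Submodule.span k (S k c d ∪ Set.range (xyfun k c d)) →
      ∀ hm : t ∈ mm k c d,
      (Submodule.Quotient.mk ⟨t, hm⟩ : MM k c d) ∈ Submodule.span k (Set.range (w k c d)) := by
    intro t ht
    refine Submodule.span_induction
      (p := fun t ht => ∀ hm : t ∈ mm k c d,
        (Submodule.Quotient.mk ⟨t, hm⟩ : MM k c d) ∈ Submodule.span k (Set.range (w k c d)))
      ?_ ?_ ?_ ?_ ht
    · rintro x ((⟨i, rfl⟩ | ⟨j, rfl⟩) | ⟨⟨i, j⟩, rfl⟩) hm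
      · exact Submodule.subset_span ⟨Sum.inl i, rfl⟩
      · exact Submodule.subset_span ⟨Sum.inr j, rfl⟩
      · have : (Submodule.Quotient.mk ⟨xyfun k c d (i, j), hm⟩ : MM k c d) = 0 := by
          rw [Submodule.Quotient.mk_eq_zero]
          show (mm k c d).subtype _ ∈ (mm k c d) ^ 2
          have he : (mm k c d).subtype ⟨xyfun k c d (i, j), hm⟩ = xyfun k c d (i, j) := rfl
          rw [he, mm_sq]
          exact Ideal.subset_span ⟨(i, j), rfl⟩
        rw [this]
        exact zero_mem _
    · intro hm
      have : (⟨(0 : Lam k c d), hm⟩ : ↥(mm k c d)) = 0 := rfl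
      rw [this, Submodule.Quotient.mk_zero]
      exact zero_mem _
    · intro x y hx hy ihx ihy hm
      have hxm : x ∈ mm k c d := by rw [← restrict_mm k c d] at hx; exact hx
      have hym : y ∈ mm k c d := by rw [← restrict_mm k c d] at hy; exact hy
      have : (⟨x + y, hm⟩ : ↥(mm k c d)) = ⟨x, hxm⟩ + ⟨y, hym⟩ := rfl
      rw [this, Submodule.Quotient.mk_add]
      exact add_mem (ihx hxm) (ihy hym)
    · intro r x hx ihx hm
      have hxm : x ∈ mm k c d := by rw [← restrict_mm k c d] at hx; exact hx
      have : (⟨r • x, hm⟩ : ↥(mm k c d)) = r • ⟨x, hxm⟩ := rfl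
      rw [this, Submodule.Quotient.mk_smul]
      exact Submodule.smul_mem _ _ (ihx hxm)
  have := claim (u : Lam k c d) hu u.2
  have he : (⟨(u : Lam k c d), u.2⟩ : ↥(mm k c d)) = u := rfl
  rwa [he] at this

/-- The basis of `J/J²`. -/
noncomputable def wBasis : Module.Basis (Fin c ⊕ Fin d) k (MM k c d) :=
  Module.Basis.mk (w_li k c d) (w_span k c d)

lemma finrank_MM : Module.finrank k (MM k c d) = c + d := by
  have : FiniteDimensional k (MM k c d) := Module.Finite.of_basis (wBasis k c d)
  rw [Module.finrank_eq_card_basis (wBasis k c d), Fintype.card_sum, Fintype.card_fin,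
    Fintype.card_fin]

lemma length_MM : moduleLength (Lam k c d) (MM k c d) = ((c + d : ℕ) : ℕ∞) := by
  have hfd : FiniteDimensional k (MM k c d) := Module.Finite.of_basis (wBasis k c d)
  rw [moduleLength, Order.krullDim_eq_of_orderIso (latticeIso k c d),
    krullDim_submodule k (MM k c d), finrank_MM]
  rfl

end Stmt18

/-- 7.3/7.1: the commutative local algebra `A = k[x₁,…,x_c,y₁,…,y_d]/(x_i x_{i'}, y_j y_{j'})`
has Hilbert type `(c+d, cd)`: its radical `J` satisfies `J³ = 0`, `|J/J²| = c + d`, and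
`J²` has `k`-basis `{x_i y_j}`; moreover `U = Σ_j A y_j` satisfies `U² = 0` and `J² ⊆ JU`,
i.e. `U` is a left Conca ideal. -/
theorem stmt_18 (k : Type*) [Field k] (c d : ℕ) :
    (Ideal.jacobson (⊥ : Ideal (Lam k c d))) ^ 3 = ⊥ ∧
    moduleLength (Lam k c d)
      (↥(Ideal.jacobson (⊥ : Ideal (Lam k c d))) ⧸ Submodule.comap
        (Ideal.jacobson (⊥ : Ideal (Lam k c d))).subtype
        ((Ideal.jacobson (⊥ : Ideal (Lam k c d))) ^ 2 : Ideal (Lam k c d)))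
      = ((c + d : ℕ) : ℕ∞) ∧
    (∃ b : Module.Basis (Fin c × Fin d) k
        (Submodule.restrictScalars k
          (((Ideal.jacobson (⊥ : Ideal (Lam k c d))) ^ 2 : Ideal (Lam k c d)) :
            Submodule (Lam k c d) (Lam k c d))),
      ∀ i : Fin c, ∀ j : Fin d, (b (i, j) : Lam k c d) = xgen k c d i * ygen k c d j) ∧
    Ideal.span (Set.range (ygen k c d)) * Ideal.span (Set.range (ygen k c d)) = ⊥ ∧
    (Ideal.jacobson (⊥ : Ideal (Lam k c d))) ^ 2 ≤
      Ideal.jacobson (⊥ : Ideal (Lam k c d)) * Ideal.span (Set.range (ygen k c d)) := by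
  rw [Stmt18.jacobson_eq k c d]
  exact ⟨Stmt18.mm_cube k c d, Stmt18.length_MM k c d,
    ⟨Stmt18.sqBasis k c d, fun i j => Stmt18.sqBasis_apply k c d i j⟩,
    Stmt18.U_sq k c d, Stmt18.sq_le_JU k c d⟩
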